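/- For every positive integer k, the ringed tree RT(k) is 40-hyperbolic with respect to Gromov's four-point condition: for all quadruples of vertices u,v,w,x of RT(k), δ(u,v,w,x) ≤ 40. -/

import Mathlib

/-- The Gromov four-point quantity `δ(u,v,w,x)`: with the three pairings of the
four vertices sorted, half the difference between the largest and the second
largest pair-sum of graph distances. -/
noncomputable def deltaFour {V : Type*} (G : SimpleGraph V) (u v w x : V) : ℝ :=
  let a : ℝ := (G.dist u v : ℝ) + (G.dist w x : ℝ)
  let b : ℝ := (G.dist u x : ℝ) + (G.dist v w : ℝ)
  let c : ℝ := (G.dist u w : ℝ) + (G.dist v x : ℝ)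
  (2 * max a (max b c) + min a (min b c) - (a + b + c)) / 2

/-- The hyperbolicity `δ(G)` of a graph: the supremum of `δ(u,v,w,x)` over all
quadruples of vertices. -/
noncomputable def hyperbolicity {V : Type*} (G : SimpleGraph V) : ℝ :=
  ⨆ u, ⨆ v, ⨆ w, ⨆ x, deltaFour G u v w x

/-- Vertex set of the ringed tree with `k` levels: level `i` (for `i < k`) consists of the
integers `{0, …, 2^i - 1}`. -/
abbrev RTV (k : ℕ) : Type := Σ i : Fin k, Fin (2 ^ (i : ℕ))

/-- Tree adjacency: each vertex `σ` at level `i` is joined to its children `2σ` and `2σ+1`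
at level `i+1`. -/
def treeAdj {k : ℕ} (u v : RTV k) : Prop :=
  ((u.1 : ℕ) + 1 = (v.1 : ℕ) ∧ ((v.2 : ℕ) = 2 * (u.2 : ℕ) ∨ (v.2 : ℕ) = 2 * (u.2 : ℕ) + 1)) ∨
  ((v.1 : ℕ) + 1 = (u.1 : ℕ) ∧ ((u.2 : ℕ) = 2 * (v.2 : ℕ) ∨ (u.2 : ℕ) = 2 * (v.2 : ℕ) + 1))

/-- Ring adjacency: at each level `i ≥ 1`, `m` is joined to `m + 1 (mod 2^i)`. -/
def ringAdj {k : ℕ} (u v : RTV k) : Prop :=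
  (u.1 : ℕ) = (v.1 : ℕ) ∧ 1 ≤ (u.1 : ℕ) ∧
    ((v.2 : ℕ) = ((u.2 : ℕ) + 1) % 2 ^ (u.1 : ℕ) ∨ (u.2 : ℕ) = ((v.2 : ℕ) + 1) % 2 ^ (v.1 : ℕ))

lemma ringAdj_no_loop {i m : ℕ} (hm : m < 2 ^ i) (hi : 1 ≤ i) : m ≠ (m + 1) % 2 ^ i := by
  have h2 : 2 ≤ 2 ^ i := by
    calc 2 = 2 ^ 1 := by norm_num
    _ ≤ 2 ^ i := Nat.pow_le_pow_right (by norm_num) hi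
  intro h
  rcases Nat.lt_or_ge (m + 1) (2 ^ i) with hlt | hge
  · rw [Nat.mod_eq_of_lt hlt] at h; omega
  · have he : m + 1 = 2 ^ i := by omega
    rw [he, Nat.mod_self] at h; omega

/-- The ringed tree `RT(k)`: the fully binary tree with `k` levels, with the vertices of each
level `i ≥ 1` additionally connected into a ring. -/
def ringedTree (k : ℕ) : SimpleGraph (RTV k) where
  Adj u v := treeAdj u v ∨ ringAdj u v
  symm := by
    constructor
    rintro u v (h | ⟨h1, h2, h3⟩)
    · exact Or.inl (Or.symm h)
    · exact Or.inr ⟨h1.symm, h1 ▸ h2, Or.symm h3⟩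
  loopless := by
    constructor
    rintro u ((⟨h1, _⟩ | ⟨h1, _⟩) | ⟨_, h2, (h3 | h3)⟩)
    · omega
    · omega
    · exact ringAdj_no_loop u.2.isLt h2 h3
    · exact ringAdj_no_loop u.2.isLt h2 h3

/-- Cyclic distance on a ring with `N` vertices: `min(|a-b|, N - |a-b|)`. -/
def cycDist (N a b : ℕ) : ℕ := min (Nat.dist a b) (N - Nat.dist a b)

/-- Ring distance `d_R(u,v)` of two vertices of a ringed tree on the same level. -/
def rtRingDist {k : ℕ} (u v : RTV k) : ℕ := cycDist (2 ^ (u.1 : ℕ)) (u.2 : ℕ) (v.2 : ℕ)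

/-- The parent of a vertex `m` at level `i ≥ 1` is `⌊m/2⌋` at level `i - 1`. -/
def rtParent {k : ℕ} (u : RTV k) (h : 1 ≤ (u.1 : ℕ)) : RTV k :=
  ⟨⟨(u.1 : ℕ) - 1, Nat.lt_of_le_of_lt (Nat.sub_le _ 1) u.1.isLt⟩,
   ⟨(u.2 : ℕ) / 2, by
      have h1 : (u.2 : ℕ) < 2 ^ (u.1 : ℕ) := u.2.isLt
      have h2 : 2 ^ ((u.1 : ℕ) - 1) * 2 = 2 ^ (u.1 : ℕ) := by
        rw [← pow_succ]; congr 1; omega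
      show (u.2 : ℕ) / 2 < 2 ^ ((u.1 : ℕ) - 1)
      exact Nat.div_lt_of_lt_mul (by omega)⟩⟩

/- ================= auxiliary development ================= -/

namespace RTAux

lemma cyc_symm (N a b : ℕ) : cycDist N a b = cycDist N b a := by
  simp [cycDist, Nat.dist_comm]

lemma cyc_tri {N a b c : ℕ} (ha : a < N) (hb : b < N) (hc : c < N) :
    cycDist N a c ≤ cycDist N a b + cycDist N b c := by
  simp only [cycDist, Nat.dist]
  omega

lemma halve (N a b : ℕ) (hN : 0 < N) :
    2 * cycDist N (a / 2) (b / 2) ≤ cycDist (2 * N) a b + 1 := by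
  simp only [cycDist, Nat.dist]
  omega

lemma cyc_eq_zero {N a b : ℕ} (ha : a < N) (hb : b < N) (h : cycDist N a b = 0) : a = b := by
  simp only [cycDist, Nat.dist] at h
  omega

/-- ancestor position of `m` (at level `i`) at level `l ≤ i`. -/
def anc (l i m : ℕ) : ℕ := m / 2 ^ (i - l)

lemma anc_lt {l i m : ℕ} (h : l ≤ i) (hm : m < 2 ^ i) : anc l i m < 2 ^ l := by
  have : 2 ^ i = 2 ^ (i - l) * 2 ^ l := by rw [← pow_add]; congr 1; omega
  exact Nat.div_lt_of_lt_mul (by omega)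

lemma anc_self (i m : ℕ) : anc i i m = m := by simp [anc]

lemma anc_zero {i m : ℕ} (hm : m < 2 ^ i) : anc 0 i m = 0 := by
  simp only [anc, Nat.sub_zero]
  exact Nat.div_eq_of_lt hm

lemma anc_anc {l l' i m : ℕ} (h1 : l ≤ l') (h2 : l' ≤ i) :
    anc l l' (anc l' i m) = anc l i m := by
  simp only [anc, Nat.div_div_eq_div_mul, ← pow_add]
  congr 2
  omega

lemma anc_succ {l i m : ℕ} (h : l < i) : anc l i m = anc (l+1) i m / 2 := by
  have := anc_anc (l := l) (l' := l+1) (i := i) (m := m) (by omega) (by omega)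
  rw [← this]; simp [anc]

lemma anc_parent {l i m : ℕ} (h : l ≤ i - 1) (hi : 1 ≤ i) :
    anc l (i-1) (m / 2) = anc l i m := by
  have h2 : anc (i-1) i m = m / 2 := by
    have : i - (i-1) = 1 := by omega
    simp [anc, this]
  rw [← h2, anc_anc h (by omega)]

lemma anc_child0 {l i m : ℕ} (h : l ≤ i) : anc l (i+1) (2*m) = anc l i m := by
  have hh : i + 1 - l = (i - l) + 1 := by omega
  rw [anc, hh, pow_succ, anc, mul_comm (2^(i-l)) 2, ← Nat.div_div_eq_div_mul,
    Nat.mul_div_cancel_left _ (by norm_num : (0:ℕ) < 2)]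

lemma anc_child1 {l i m : ℕ} (h : l ≤ i) : anc l (i+1) (2*m+1) = anc l i m := by
  have hh : i + 1 - l = (i - l) + 1 := by omega
  rw [anc, hh, pow_succ, anc, mul_comm (2^(i-l)) 2, ← Nat.div_div_eq_div_mul]
  congr 1
  omega

lemma anc_child' {l i i' m m' : ℕ} (h1 : i + 1 = i') (h2 : m' = 2*m ∨ m' = 2*m+1)
    (h : l ≤ i) : anc l i' m' = anc l i m := by
  subst h1
  rcases h2 with h2 | h2
  · rw [h2, anc_child0 h]
  · rw [h2, anc_child1 h]

lemma anc_ring {l i m : ℕ} (h : l ≤ i) (hm : m < 2 ^ i) :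
    cycDist (2 ^ l) (anc l i m) (anc l i ((m+1) % 2 ^ i)) ≤ 1 := by
  have hq : 0 < 2 ^ (i - l) := Nat.pow_pos (by norm_num)
  rcases Nat.lt_or_ge (m + 1) (2 ^ i) with hlt | hge
  · rw [Nat.mod_eq_of_lt hlt]
    have h1 : anc l i m ≤ anc l i (m+1) := Nat.div_le_div_right (by omega)
    have h2 : anc l i (m+1) ≤ anc l i m + 1 := by
      have : (m + 1) / 2 ^ (i-l) ≤ (m + 2 ^ (i-l)) / 2 ^ (i-l) := Nat.div_le_div_right (by omega)
      rw [Nat.add_div_right _ hq] at this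
      exact this
    simp only [cycDist, Nat.dist]
    omega
  · have he : m + 1 = 2 ^ i := by omega
    have h2 : 2 ^ i = 2 ^ (i - l) * 2 ^ l := by rw [← pow_add]; congr 1; omega
    have hm' : m = 2 ^ (i-l) * 2 ^ l - 1 := by omega
    have h3 : anc l i m = 2 ^ l - 1 := by
      rw [anc, hm']
      have hp : 0 < 2 ^ l := Nat.pow_pos (by norm_num)
      have he2 : 2 ^ (i-l) * 2 ^ l - 1 = 2 ^ (i-l) * (2 ^ l - 1) + (2 ^ (i-l) - 1) := by
        cases' Nat.exists_eq_add_of_lt hp with c hc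
        cases' Nat.exists_eq_add_of_lt hq with d hd
        have e1 : 2 ^ (i-l) = d + 1 := by omega
        have e2 : 2 ^ l = c + 1 := by omega
        rw [e1, e2]
        simp only [Nat.add_sub_cancel]
        have : (d+1)*(c+1) = (d+1)*c + d + 1 := by ring
        omega
      rw [he2, Nat.mul_add_div hq, Nat.div_eq_of_lt (by omega), Nat.add_zero]
    have h4 : anc l i ((m+1) % 2^i) = 0 := by
      rw [he, Nat.mod_self]
      exact anc_zero (Nat.pow_pos (by norm_num))
    rw [h3, h4]
    have : 0 < 2 ^ l := Nat.pow_pos (by norm_num)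
    simp only [cycDist, Nat.dist]
    omega

set_option maxHeartbeats 1600000 in
lemma ring_step_key {N a b : ℕ} (ha : a < N) (hb : b < N) (h : 0 < cycDist N a b) :
    (a + 1 < N ∧ cycDist N (a+1) b + 1 = cycDist N a b) ∨
      (a + 1 = N ∧ cycDist N 0 b + 1 = cycDist N a b) ∨
      (0 < a ∧ cycDist N (a-1) b + 1 = cycDist N a b) ∨
      (a = 0 ∧ cycDist N (N-1) b + 1 = cycDist N a b) := by
  simp only [cycDist, Nat.dist] at h ⊢
  rcases lt_trichotomy a b with hab | hab | hab
  · rcases le_or_gt (b - a) (N - (b - a)) with hd | hd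
    · left; omega
    · rcases Nat.eq_zero_or_pos a with rfl | hpos
      · right; right; right; omega
      · right; right; left; omega
  · omega
  · rcases le_or_gt (a - b) (N - (a - b)) with hd | hd
    · right; right; left; omega
    · rcases Nat.lt_or_ge (a+1) N with hN | hN
      · left; omega
      · right; left; omega

lemma ring_step {N a b : ℕ} (ha : a < N) (hb : b < N) (h : 0 < cycDist N a b) :
    ∃ a', a' < N ∧ (a' = (a+1) % N ∨ a = (a'+1) % N) ∧ cycDist N a' b + 1 = cycDist N a b := by
  rcases ring_step_key ha hb h with ⟨h1, h2⟩ | ⟨h1, h2⟩ | ⟨h1, h2⟩ | ⟨h1, h2⟩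
  · exact ⟨a+1, h1, Or.inl (Nat.mod_eq_of_lt h1).symm, h2⟩
  · refine ⟨0, by omega, Or.inl ?_, h2⟩
    rw [h1, Nat.mod_self]
  · refine ⟨a-1, by omega, Or.inr ?_, h2⟩
    have : a - 1 + 1 = a := by omega
    rw [this, Nat.mod_eq_of_lt ha]
  · refine ⟨N-1, by omega, Or.inr ?_, h2⟩
    have : N - 1 + 1 = N := by omega
    rw [this, Nat.mod_self, h1]

end RTAux

open RTAux

section Main

variable {k : ℕ}

/-- vertex constructor -/
def vert (i : ℕ) (hi : i < k) (m : ℕ) (hm : m < 2 ^ i) : RTV k := ⟨⟨i, hi⟩, ⟨m, hm⟩⟩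

@[simp] lemma vert_fst (i : ℕ) (hi : i < k) (m : ℕ) (hm : m < 2 ^ i) :
    ((vert i hi m hm : RTV k).1 : ℕ) = i := rfl

@[simp] lemma vert_snd (i : ℕ) (hi : i < k) (m : ℕ) (hm : m < 2 ^ i) :
    ((vert i hi m hm : RTV k).2 : ℕ) = m := rfl

lemma vert_eta (u : RTV k) : vert (u.1 : ℕ) u.1.isLt (u.2 : ℕ) u.2.isLt = u := rfl

lemma vert_congr {i m m' : ℕ} (hi hi' : i < k) (hm : m < 2 ^ i) (hm' : m' < 2 ^ i)
    (h : m = m') : (vert i hi m hm : RTV k) = vert i hi' m' hm' := by subst h; rfl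

/-- cyclic distance between the level-`l` ancestors of `u` and `v`. -/
def cc (l : ℕ) (u v : RTV k) : ℕ :=
  cycDist (2 ^ l) (anc l (u.1 : ℕ) (u.2 : ℕ)) (anc l (v.1 : ℕ) (v.2 : ℕ))

lemma cc_symm (l : ℕ) (u v : RTV k) : cc l u v = cc l v u := cyc_symm _ _ _

lemma cc_zero (u v : RTV k) : cc 0 u v = 0 := by
  simp [cc, anc_zero u.2.isLt, anc_zero v.2.isLt, cycDist]

lemma cc_self (u : RTV k) (l : ℕ) : cc l u u = 0 := by
  simp [cc, cycDist]

lemma cc_step (l : ℕ) (u v : RTV k) (h1 : l < (u.1 : ℕ)) (h2 : l < (v.1 : ℕ)) :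
    2 * cc l u v ≤ cc (l+1) u v + 1 := by
  have e1 := anc_succ (m := (u.2 : ℕ)) h1
  have e2 := anc_succ (m := (v.2 : ℕ)) h2
  have := halve (2 ^ l) (anc (l+1) (u.1 : ℕ) (u.2 : ℕ)) (anc (l+1) (v.1 : ℕ) (v.2 : ℕ))
    (Nat.pow_pos (by norm_num))
  rw [← e1, ← e2] at this
  simpa [cc, pow_succ, mul_comm] using this

lemma cc_tri (l : ℕ) (u v w : RTV k) (h1 : l ≤ (u.1 : ℕ)) (h2 : l ≤ (v.1 : ℕ))
    (h3 : l ≤ (w.1 : ℕ)) : cc l u w ≤ cc l u v + cc l v w :=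
  cyc_tri (anc_lt h1 u.2.isLt) (anc_lt h2 v.2.isLt) (anc_lt h3 w.2.isLt)

/-- the meeting level of `u` and `v`: the largest level (at most both levels) at which
the ancestors of `u` and `v` are within cyclic distance 2. -/
def meet (u v : RTV k) : ℕ :=
  Nat.findGreatest (fun l => cc l u v ≤ 2) (min (u.1 : ℕ) (v.1 : ℕ))

lemma meet_le_left (u v : RTV k) : meet u v ≤ (u.1 : ℕ) :=
  le_trans (Nat.findGreatest_le _) (min_le_left _ _)

lemma meet_le_right (u v : RTV k) : meet u v ≤ (v.1 : ℕ) :=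
  le_trans (Nat.findGreatest_le _) (min_le_right _ _)

lemma meet_symm (u v : RTV k) : meet u v = meet v u := by
  unfold meet
  rw [min_comm]
  congr 1
  funext l
  rw [cc_symm]

lemma cc_meet (u v : RTV k) : cc (meet u v) u v ≤ 2 :=
  Nat.findGreatest_spec (P := fun l => cc l u v ≤ 2) (m := 0) (Nat.zero_le _) (by show cc 0 u v ≤ 2; rw [cc_zero]; omega)

lemma le_meet {l : ℕ} (u v : RTV k) (h1 : l ≤ (u.1 : ℕ)) (h2 : l ≤ (v.1 : ℕ))
    (h : cc l u v ≤ 2) : l ≤ meet u v :=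
  Nat.le_findGreatest (le_min h1 h2) h

/-- below the meet level, ancestors stay close. -/
lemma cc_le_two_aux (u v : RTV k) : ∀ d l, l + d = meet u v → cc l u v ≤ 2 := by
  intro d
  induction d with
  | zero =>
    intro l hl
    rw [Nat.add_zero] at hl
    rw [hl]
    exact cc_meet u v
  | succ d ih =>
    intro l hl
    have h1 : l < (u.1 : ℕ) := by have := meet_le_left u v; omega
    have h2 : l < (v.1 : ℕ) := by have := meet_le_right u v; omega
    have hs := cc_step l u v h1 h2
    have := ih (l + 1) (by omega)
    omega

lemma cc_le_two_of_le (u v : RTV k) {l : ℕ} (h : l ≤ meet u v) : cc l u v ≤ 2 :=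
  cc_le_two_aux u v (meet u v - l) l (by omega)

/-- above the meet level, ancestors separate geometrically. -/
lemma cc_growth (u v : RTV k) {t : ℕ} (ht : 1 ≤ t)
    (h : meet u v + t ≤ min (u.1 : ℕ) (v.1 : ℕ)) :
    2 ^ t + 1 ≤ cc (meet u v + t) u v := by
  induction t, ht using Nat.le_induction with
  | base =>
    by_contra hcon
    push_neg at hcon
    have : meet u v + 1 ≤ meet u v :=
      le_meet u v (by have := min_le_left (u.1:ℕ) (v.1:ℕ); omega)
        (by have := min_le_right (u.1:ℕ) (v.1:ℕ); omega) (by omega)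
    omega
  | succ t ht ih =>
    show 2 ^ (t+1) + 1 ≤ cc (meet u v + t + 1) u v
    have hih := ih (by omega)
    have hstep := cc_step (meet u v + t) u v
      (by have := min_le_left (u.1:ℕ) (v.1:ℕ); omega)
      (by have := min_le_right (u.1:ℕ) (v.1:ℕ); omega)
    have hpow : 2 ^ (t+1) = 2 * 2 ^ t := by ring
    omega

/-- quasi-ultrametric inequality for the meet level. -/
lemma meet_ultra (u v w : RTV k) :
    min (meet u v) (meet v w) ≤ meet u w + 1 := by
  set l := min (meet u v) (meet v w) with hl
  rcases Nat.eq_zero_or_pos l with h0 | hpos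
  · omega
  · have hu : l ≤ (u.1 : ℕ) := le_trans (min_le_left _ _) (meet_le_left u v)
    have hv : l ≤ (v.1 : ℕ) := le_trans (min_le_left _ _) (meet_le_right u v)
    have hw : l ≤ (w.1 : ℕ) := le_trans (min_le_right _ _) (meet_le_right v w)
    have c1 : cc l u v ≤ 2 := cc_le_two_of_le u v (min_le_left _ _)
    have c2 : cc l v w ≤ 2 := cc_le_two_of_le v w (min_le_right _ _)
    have c3 : cc l u w ≤ 4 := le_trans (cc_tri l u v w hu hv hw) (by omega)
    have hstep := cc_step (l-1) u w (by omega) (by omega)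
    have hl1 : l - 1 + 1 = l := by omega
    rw [hl1] at hstep
    have : l - 1 ≤ meet u w :=
      le_meet u w (by omega) (by omega) (by omega)
    omega

end Main

open SimpleGraph
section Walks

variable {k : ℕ}

/-- vertex at level `l ≤ level of u` given by the ancestor of `u`. -/
def ancV (u : RTV k) (l : ℕ) (h : l ≤ (u.1 : ℕ)) : RTV k :=
  vert l (lt_of_le_of_lt h u.1.isLt) (anc l (u.1 : ℕ) (u.2 : ℕ)) (anc_lt h u.2.isLt)

lemma ancV_self (u : RTV k) : ancV u (u.1 : ℕ) le_rfl = u := by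
  show vert _ _ _ _ = u
  conv_rhs => rw [← vert_eta u]
  exact vert_congr _ _ _ _ (anc_self _ _)

lemma adj_parent (u : RTV k) (h1 : 1 ≤ (u.1 : ℕ)) :
    (ringedTree k).Adj u (rtParent u h1) := by
  have e1 : ((rtParent u h1).1 : ℕ) = (u.1 : ℕ) - 1 := rfl
  have e2 : ((rtParent u h1).2 : ℕ) = (u.2 : ℕ) / 2 := rfl
  exact Or.inl (Or.inr ⟨by omega, by omega⟩)

lemma ascent : ∀ (n : ℕ) (u : RTV k) (l : ℕ) (h : l ≤ (u.1 : ℕ)), (u.1 : ℕ) - l = n →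
    ∃ p : (ringedTree k).Walk u (ancV u l h), p.length = n := by
  intro n
  induction n with
  | zero =>
    intro u l h hn
    have hl : l = (u.1 : ℕ) := by omega
    subst hl
    exact ⟨Walk.nil.copy rfl (ancV_self u).symm, by simp⟩
  | succ n ih =>
    intro u l h hn
    have hi1 : 1 ≤ (u.1 : ℕ) := by omega
    have e1 : ((rtParent u hi1).1 : ℕ) = (u.1 : ℕ) - 1 := rfl
    have e2 : ((rtParent u hi1).2 : ℕ) = (u.2 : ℕ) / 2 := rfl
    have h' : l ≤ ((rtParent u hi1).1 : ℕ) := by omega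
    obtain ⟨p, hp⟩ := ih (rtParent u hi1) l h' (by omega)
    have heq : ancV (rtParent u hi1) l h' = ancV u l h := by
      apply vert_congr
      show anc l ((u.1:ℕ) - 1) ((u.2:ℕ) / 2) = anc l (u.1:ℕ) (u.2:ℕ)
      exact anc_parent (by omega) hi1
    refine ⟨Walk.cons (adj_parent u hi1) (p.copy rfl heq), by simp [hp]⟩

lemma ringWalk : ∀ (c l : ℕ) (hl : l < k) (a b : ℕ) (ha : a < 2 ^ l) (hb : b < 2 ^ l),
    cycDist (2 ^ l) a b = c →
    ∃ p : (ringedTree k).Walk (vert l hl a ha) (vert l hl b hb), p.length = c := by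
  intro c
  induction c with
  | zero =>
    intro l hl a b ha hb h
    have hab : a = b := cyc_eq_zero ha hb h
    subst hab
    exact ⟨Walk.nil, rfl⟩
  | succ c ih =>
    intro l hl a b ha hb h
    have hl1 : 1 ≤ l := by
      by_contra h0
      have hl0 : l = 0 := by omega
      subst hl0
      rw [pow_zero] at ha hb
      simp only [cycDist, Nat.dist] at h
      omega
    obtain ⟨a', ha', hadj, hc⟩ := ring_step ha hb (by omega)
    have adj : (ringedTree k).Adj (vert l hl a ha) (vert l hl a' ha') := by
      refine Or.inr ⟨rfl, hl1, ?_⟩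
      simpa using hadj
    obtain ⟨p, hp⟩ := ih l hl a' b ha' hb (by omega)
    exact ⟨Walk.cons adj p, by simp [hp]⟩

lemma exists_middle_walk (u v : RTV k) :
    ∃ p : (ringedTree k).Walk u v,
      p.length = ((u.1 : ℕ) - meet u v) + cc (meet u v) u v + ((v.1 : ℕ) - meet u v) := by
  have hu : meet u v ≤ (u.1 : ℕ) := meet_le_left u v
  have hv : meet u v ≤ (v.1 : ℕ) := meet_le_right u v
  have hlk : meet u v < k := lt_of_le_of_lt hu u.1.isLt
  obtain ⟨p1, hp1⟩ := ascent ((u.1 : ℕ) - meet u v) u (meet u v) hu rfl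
  obtain ⟨p3, hp3⟩ := ascent ((v.1 : ℕ) - meet u v) v (meet u v) hv rfl
  obtain ⟨p2, hp2⟩ := ringWalk (cc (meet u v) u v) (meet u v) hlk
    (anc (meet u v) (u.1 : ℕ) (u.2 : ℕ)) (anc (meet u v) (v.1 : ℕ) (v.2 : ℕ))
    (anc_lt hu u.2.isLt) (anc_lt hv v.2.isLt) rfl
  obtain ⟨q1, hq1⟩ : ∃ q : (ringedTree k).Walk u (vert (meet u v) hlk
      (anc (meet u v) (u.1 : ℕ) (u.2 : ℕ)) (anc_lt hu u.2.isLt)),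
      q.length = (u.1 : ℕ) - meet u v := ⟨p1, hp1⟩
  obtain ⟨q3, hq3⟩ : ∃ q : (ringedTree k).Walk (vert (meet u v) hlk
      (anc (meet u v) (v.1 : ℕ) (v.2 : ℕ)) (anc_lt hv v.2.isLt)) v,
      q.length = (v.1 : ℕ) - meet u v := ⟨p3.reverse, (Walk.length_reverse p3).trans hp3⟩
  refine ⟨q1.append (p2.append q3), ?_⟩
  simp [hq1, hp2, hq3]
  omega

lemma rt_reachable (u v : RTV k) : (ringedTree k).Reachable u v :=
  ⟨(exists_middle_walk u v).choose⟩

lemma dist_upper (u v : RTV k) :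
    (ringedTree k).dist u v + 2 * meet u v ≤ (u.1 : ℕ) + (v.1 : ℕ) + 2 := by
  obtain ⟨p, hp⟩ := exists_middle_walk u v
  have h1 := SimpleGraph.dist_le p
  have h2 := cc_meet u v
  have hu := meet_le_left u v
  have hv := meet_le_right u v
  omega

lemma walk_lower {u v : RTV k} (p : (ringedTree k).Walk u v) :
    ∃ l, l ≤ (u.1 : ℕ) ∧ l ≤ (v.1 : ℕ) ∧
      ((u.1 : ℕ) - l) + ((v.1 : ℕ) - l) + (cc l u v - 2) ≤ p.length := by
  induction p with
  | nil => exact ⟨_, le_rfl, le_rfl, by simp [cc_self]⟩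
  | @cons a b c hadj p ih =>
    obtain ⟨l, hl1, hl2, hl3⟩ := ih
    rcases hadj with (⟨h1, h2⟩ | ⟨h1, h2⟩) | ⟨h1, h2, h3⟩
    · -- a is the parent of b
      rcases le_or_gt l ((a.1 : ℕ)) with hc | hc
      · -- use same level l
        have hanc : anc l (b.1 : ℕ) (b.2 : ℕ) = anc l (a.1 : ℕ) (a.2 : ℕ) :=
          anc_child' h1 h2 hc
        have hcc : cc l a c = cc l b c := by
          unfold cc
          rw [hanc]
        refine ⟨l, hc, hl2, ?_⟩
        rw [hcc]
        show _ ≤ p.length + 1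
        omega
      · -- l = a.1 + 1 = b.1 ; go down to level a.1
        have hle : l = (a.1 : ℕ) + 1 := by omega
        have hanc : anc (a.1 : ℕ) (b.1 : ℕ) (b.2 : ℕ) = anc (a.1:ℕ) (a.1 : ℕ) (a.2 : ℕ) :=
          anc_child' h1 h2 (le_refl _)
        have hcc : cc (a.1 : ℕ) a c = cc (a.1 : ℕ) b c := by
          unfold cc
          rw [hanc]
        have hstep : 2 * cc (a.1 : ℕ) b c ≤ cc l b c + 1 := by
          rw [hle]
          exact cc_step _ _ _ (by omega) (by omega)
        refine ⟨(a.1 : ℕ), le_rfl, by omega, ?_⟩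
        rw [hcc]
        show _ ≤ p.length + 1
        omega
    · -- b is the parent of a
      have hc : l ≤ (b.1 : ℕ) := hl1
      have hanc : anc l (a.1 : ℕ) (a.2 : ℕ) = anc l (b.1 : ℕ) (b.2 : ℕ) :=
        anc_child' h1 h2 hc
      have hcc : cc l a c = cc l b c := by
        unfold cc
        rw [hanc]
      refine ⟨l, by omega, hl2, ?_⟩
      rw [hcc]
      show _ ≤ p.length + 1
      omega
    · -- ring edge between a and b
      have hab : cc l a b ≤ 1 := by
        rcases h3 with h3 | h3
        · unfold cc
          rw [h3, ← h1]
          exact anc_ring (by omega) a.2.isLt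
        · unfold cc
          rw [cyc_symm, h3, h1]
          exact anc_ring (by omega) b.2.isLt
      have htri : cc l a c ≤ cc l a b + cc l b c :=
        cc_tri l a b c (by omega) (by omega) hl2
      refine ⟨l, by omega, hl2, ?_⟩
      show _ ≤ p.length + 1
      omega

lemma two_pow_linear : ∀ t : ℕ, 2 * t ≤ 2 ^ t + 2 := by
  intro t
  induction t with
  | zero => norm_num
  | succ t ih =>
    have h1 : 1 ≤ 2 ^ t := Nat.one_le_two_pow
    have h2 : 2 ^ (t+1) = 2 * 2 ^ t := by ring
    omega

lemma dist_lower (u v : RTV k) :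
    (u.1 : ℕ) + (v.1 : ℕ) ≤ (ringedTree k).dist u v + 2 * meet u v + 3 := by
  obtain ⟨p, hp⟩ := (rt_reachable u v).exists_walk_length_eq_dist
  obtain ⟨l, h1, h2, h3⟩ := walk_lower p
  rw [hp] at h3
  rcases le_or_gt l (meet u v) with hc | hc
  · have := meet_le_left u v
    have := meet_le_right u v
    omega
  · have hg := cc_growth u v (t := l - meet u v) (by omega)
      (by rw [Nat.le_min]; constructor <;> omega)
    have hterm : meet u v + (l - meet u v) = l := by omega
    rw [hterm] at hg
    have hpow := two_pow_linear (l - meet u v)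
    omega

end Walks


set_option maxHeartbeats 8000000

/-- For every positive integer `k`, the ringed tree `RT(k)` is
`40`-hyperbolic for Gromov's four-point condition: `δ(u,v,w,x) ≤ 40` for all vertices. -/
theorem ringedTree_forty_hyperbolic (k : ℕ) (hk : 0 < k) (u v w x : RTV k) :
    deltaFour (ringedTree k) u v w x ≤ 40 := by
  have key : 2 * max ((ringedTree k).dist u v + (ringedTree k).dist w x)
        (max ((ringedTree k).dist u x + (ringedTree k).dist v w)
          ((ringedTree k).dist u w + (ringedTree k).dist v x))
      + min ((ringedTree k).dist u v + (ringedTree k).dist w x)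
        (min ((ringedTree k).dist u x + (ringedTree k).dist v w)
          ((ringedTree k).dist u w + (ringedTree k).dist v x)) ≤
      ((ringedTree k).dist u v + (ringedTree k).dist w x) +
      ((ringedTree k).dist u x + (ringedTree k).dist v w) +
      ((ringedTree k).dist u w + (ringedTree k).dist v x) + 80 := by
    have U1 := dist_upper u v; have L1 := dist_lower u v
    have U2 := dist_upper w x; have L2 := dist_lower w x
    have U3 := dist_upper u x; have L3 := dist_lower u x
    have U4 := dist_upper v w; have L4 := dist_lower v w
    have U5 := dist_upper u w; have L5 := dist_lower u w
    have U6 := dist_upper v x; have L6 := dist_lower v x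
    have s1 : meet v u = meet u v := meet_symm v u
    have s2 : meet w u = meet u w := meet_symm w u
    have s3 : meet x u = meet u x := meet_symm x u
    have s4 : meet w v = meet v w := meet_symm w v
    have s5 : meet x v = meet v x := meet_symm x v
    have s6 : meet x w = meet w x := meet_symm x w
    have t1 := meet_ultra u w v
    have t2 := meet_ultra u x v
    have t3 := meet_ultra u v w
    have t4 := meet_ultra u x w
    have t5 := meet_ultra u v x
    have t6 := meet_ultra u w x
    have t7 := meet_ultra v u w
    have t8 := meet_ultra v x w
    have t9 := meet_ultra v u x
    have t10 := meet_ultra v w x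
    have t11 := meet_ultra w u x
    have t12 := meet_ultra w v x
    omega
  show (2 * max (((ringedTree k).dist u v : ℝ) + ((ringedTree k).dist w x : ℝ))
      (max (((ringedTree k).dist u x : ℝ) + ((ringedTree k).dist v w : ℝ))
        (((ringedTree k).dist u w : ℝ) + ((ringedTree k).dist v x : ℝ)))
    + min (((ringedTree k).dist u v : ℝ) + ((ringedTree k).dist w x : ℝ))
      (min (((ringedTree k).dist u x : ℝ) + ((ringedTree k).dist v w : ℝ))
        (((ringedTree k).dist u w : ℝ) + ((ringedTree k).dist v x : ℝ)))
    - ((((ringedTree k).dist u v : ℝ) + ((ringedTree k).dist w x : ℝ))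
      + (((ringedTree k).dist u x : ℝ) + ((ringedTree k).dist v w : ℝ))
      + (((ringedTree k).dist u w : ℝ) + ((ringedTree k).dist v x : ℝ)))) / 2 ≤ 40
  have eA : (((ringedTree k).dist u v : ℝ) + ((ringedTree k).dist w x : ℝ))
      = (((ringedTree k).dist u v + (ringedTree k).dist w x : ℕ) : ℝ) := by push_cast; ring
  have eB : (((ringedTree k).dist u x : ℝ) + ((ringedTree k).dist v w : ℝ))
      = (((ringedTree k).dist u x + (ringedTree k).dist v w : ℕ) : ℝ) := by push_cast; ring
  have eC : (((ringedTree k).dist u w : ℝ) + ((ringedTree k).dist v x : ℝ))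
      = (((ringedTree k).dist u w + (ringedTree k).dist v x : ℕ) : ℝ) := by push_cast; ring
  rw [eA, eB, eC, ← Nat.cast_max, ← Nat.cast_max, ← Nat.cast_min, ← Nat.cast_min,
    div_le_iff₀ (by norm_num : (0:ℝ) < 2)]
  have keyR : 2 * ((max ((ringedTree k).dist u v + (ringedTree k).dist w x)
        (max ((ringedTree k).dist u x + (ringedTree k).dist v w)
          ((ringedTree k).dist u w + (ringedTree k).dist v x)) : ℕ) : ℝ)
      + ((min ((ringedTree k).dist u v + (ringedTree k).dist w x)
        (min ((ringedTree k).dist u x + (ringedTree k).dist v w)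
          ((ringedTree k).dist u w + (ringedTree k).dist v x)) : ℕ) : ℝ) ≤
      (((ringedTree k).dist u v + (ringedTree k).dist w x : ℕ) : ℝ) +
      (((ringedTree k).dist u x + (ringedTree k).dist v w : ℕ) : ℝ) +
      (((ringedTree k).dist u w + (ringedTree k).dist v x : ℕ) : ℝ) + 80 := by
    exact_mod_cast key
  linarith
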